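/- Let F be a group, S a normal subgroup of F, and set R = S·γ_2(F). Then for every m ≥ 1, [R, F, ..., F] (m copies of F) equals ρ_{m+1}(S)·γ_{m+2}(F), where ρ_1(S) = S and ρ_{k+1}(S) = [ρ_k(S), F]. -/

import Mathlib

/-- `iterComm S 0 = S`, `iterComm S (m+1) = [iterComm S m, F]`; so
`ρ_{m+1}(S) = iterComm S m` and `[R, F, …, F]` (`m` copies) `= iterComm R m`. -/
def iterComm {F : Type*} [Group F] (S : Subgroup F) : ℕ → Subgroup F
  | 0 => S
  | n + 1 => ⁅iterComm S n, (⊤ : Subgroup F)⁆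


open Subgroup commutatorElement in
lemma comm_sup_top' {F : Type*} [Group F] (A B : Subgroup F) (hB : B.Normal) :
    ⁅A ⊔ B, (⊤ : Subgroup F)⁆ = ⁅A, (⊤ : Subgroup F)⁆ ⊔ ⁅B, (⊤ : Subgroup F)⁆ := by
  apply le_antisymm
  · rw [commutator_le]
    intro g hg t _
    rw [← SetLike.mem_coe, Subgroup.mul_normal A B] at hg
    obtain ⟨a, ha, b, hb, rfl⟩ := hg
    have key : ⁅a * b, t⁆ = a * ⁅b, t⁆ * a⁻¹ * ⁅a, t⁆ := by
      simp [commutatorElement_def]; group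
    rw [key]
    have h1 : a * ⁅b, t⁆ * a⁻¹ ∈ ⁅B, (⊤ : Subgroup F)⁆ := by
      haveI : (⁅B, (⊤ : Subgroup F)⁆).Normal := Subgroup.commutator_normal B ⊤
      exact this.conj_mem _ (Subgroup.commutator_mem_commutator hb (mem_top t)) a
    exact mul_mem (le_sup_right (α := Subgroup F) h1 : _)
      (le_sup_left (α := Subgroup F) (Subgroup.commutator_mem_commutator ha (mem_top t)))
  · exact sup_le (Subgroup.commutator_mono le_sup_left le_rfl)
      (Subgroup.commutator_mono le_sup_right le_rfl)

lemma iterComm_normal' {F : Type*} [Group F] (S : Subgroup F) (hS : S.Normal) :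
    ∀ n, (iterComm S n).Normal
  | 0 => hS
  | n + 1 => haveI := iterComm_normal' S hS n; Subgroup.commutator_normal _ _

/-- Let `S ⊴ F` and `R = S·γ₂(F)` (the join, since both are normal). Then for
every `m ≥ 1`, `[R, F, …, F]` (`m` copies of `F`) equals `ρ_{m+1}(S)·γ_{m+2}(F)`.
In Mathlib's indexing `γ_n(F) = (⊤ : Subgroup F).lowerCentralSeries (n-1)`. -/
theorem iterComm_join_gamma {F : Type*} [Group F] (S : Subgroup F) (hS : S.Normal)
    (R : Subgroup F) (hR : R = S ⊔ (⊤ : Subgroup F).lowerCentralSeries 1) :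
    ∀ m : ℕ, 1 ≤ m → iterComm R m = iterComm S m ⊔ (⊤ : Subgroup F).lowerCentralSeries (m + 1) := by
  have key : ∀ m : ℕ, iterComm R m = iterComm S m ⊔ (⊤ : Subgroup F).lowerCentralSeries (m + 1) ∨ m = 0 := by
    intro m
    induction m with
    | zero => exact Or.inr rfl
    | succ n ih =>
      left
      have hlcs : ∀ k, (⊤ : Subgroup F).lowerCentralSeries (k + 1) = ⁅(⊤ : Subgroup F).lowerCentralSeries k, (⊤ : Subgroup F)⁆ :=
        fun k => rfl
      rcases ih with h | h
      · show ⁅iterComm R n, (⊤ : Subgroup F)⁆ = _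
        rw [h, comm_sup_top' _ _ (by infer_instance), ← hlcs]
        rfl
      · subst h
        show ⁅R, (⊤ : Subgroup F)⁆ = _
        rw [hR, comm_sup_top' _ _ (by infer_instance), ← hlcs]
        rfl
  intro m hm
  rcases key m with h | h
  · exact h
  · omega
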